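/- The two presentations ⟨y, u ∣ yuy = uyu, (yuy)^4 = 1⟩ and ⟨x, z ∣ x^4 = 1, x^2 = z^3⟩ define isomorphic groups, via the map sending z ↦ yu and x ↦ (yuy)^{-1}. -/

import Mathlib

/-- Generators of the first presentation: `y` and `u`. -/
inductive GenYU | y | u
deriving DecidableEq

/-- Generators of the second presentation: `x` and `z`. -/
inductive GenXZ | x | z
deriving DecidableEq

open FreeGroup in
/-- Relators `yuy (uyu)⁻¹` and `(yuy)^4`. -/
def RelsYU : Set (FreeGroup GenYU) :=
  { of GenYU.y * of GenYU.u * of GenYU.y * (of GenYU.u * of GenYU.y * of GenYU.u)⁻¹,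
    (of GenYU.y * of GenYU.u * of GenYU.y) ^ 4 }

open FreeGroup in
/-- Relators `x^4` and `x^2 (z^3)⁻¹`. -/
def RelsXZ : Set (FreeGroup GenXZ) :=
  { of GenXZ.x ^ 4, of GenXZ.x ^ 2 * (of GenXZ.z ^ 3)⁻¹ }

lemma rel_eq_one {α : Type*} {rels : Set (FreeGroup α)} {r : FreeGroup α} (hr : r ∈ rels) :
    PresentedGroup.mk rels r = 1 :=
  (QuotientGroup.eq_one_iff r).mpr (Subgroup.subset_normalClosure hr)

namespace Aux

local notation "Y" => (PresentedGroup.of GenYU.y : PresentedGroup RelsYU)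
local notation "U" => (PresentedGroup.of GenYU.u : PresentedGroup RelsYU)
local notation "X" => (PresentedGroup.of GenXZ.x : PresentedGroup RelsXZ)
local notation "Z" => (PresentedGroup.of GenXZ.z : PresentedGroup RelsXZ)

lemma rel1 : Y * U * Y = U * Y * U := by
  have := rel_eq_one (rels := RelsYU) (Or.inl rfl)
  simp only [map_mul, map_inv] at this
  exact mul_inv_eq_one.mp this

lemma rel2 : (Y * U * Y) ^ 4 = 1 := by
  have := rel_eq_one (rels := RelsYU) (Or.inr rfl)
  simp only [map_mul, map_pow] at this
  exact this

lemma rel3 : X ^ 4 = 1 := by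
  have := rel_eq_one (rels := RelsXZ) (Or.inl rfl)
  simp only [map_mul, map_pow] at this
  exact this

lemma rel4 : X ^ 2 = Z ^ 3 := by
  have := rel_eq_one (rels := RelsXZ) (Or.inr rfl)
  simp only [map_mul, map_pow, map_inv] at this
  exact mul_inv_eq_one.mp this

/-- forward map on generators: x ↦ (yuy)⁻¹, z ↦ yu -/
def fwd : GenXZ → PresentedGroup RelsYU
  | GenXZ.x => (Y * U * Y)⁻¹
  | GenXZ.z => Y * U

/-- backward map on generators: y ↦ z⁻¹x⁻¹, u ↦ xz² -/
def bwd : GenYU → PresentedGroup RelsXZ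
  | GenYU.y => Z⁻¹ * X⁻¹
  | GenYU.u => X * Z ^ 2

lemma fwd_rels : ∀ r ∈ RelsXZ, FreeGroup.lift fwd r = 1 := by
  rintro r (rfl | rfl) <;> simp only [map_mul, map_pow, map_inv, FreeGroup.lift_apply_of, fwd]
  · rw [inv_pow, rel2, inv_one]
  · have h2 : (Y * U * Y)⁻¹ ^ 2 = (Y * U) ^ 3 := by
      have : (Y * U * Y) ^ 2 = (Y * U) ^ 3 := by
        calc (Y * U * Y) ^ 2 = (Y * U * Y) * (U * Y * U) := by rw [sq, rel1]
        _ = (Y * U) ^ 3 := by rw [pow_succ, pow_succ, pow_one]; group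
      have h4 : (Y * U * Y)⁻¹ ^ 2 = (Y * U * Y) ^ 2 := by
        rw [inv_pow, eq_comm, eq_inv_iff_mul_eq_one, ← pow_add]
        exact rel2
      rw [h4, this]
    rw [h2, mul_inv_cancel]

lemma bwd_rels : ∀ r ∈ RelsYU, FreeGroup.lift bwd r = 1 := by
  have key : (Z⁻¹ * X⁻¹) * (X * Z ^ 2) * (Z⁻¹ * X⁻¹) = X⁻¹ := by group
  have key2 : (X * Z ^ 2) * (Z⁻¹ * X⁻¹) * (X * Z ^ 2) = X⁻¹ := by
    have : (X * Z ^ 2) * (Z⁻¹ * X⁻¹) * (X * Z ^ 2) = X * Z ^ 3 := by group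
    rw [this, ← rel4, ← pow_succ']
    rw [eq_inv_iff_mul_eq_one, ← pow_succ]
    exact rel3
  rintro r (rfl | rfl) <;> simp only [map_mul, map_pow, map_inv, FreeGroup.lift_apply_of, bwd]
  · rw [key, key2, mul_inv_cancel]
  · rw [key, inv_pow, rel3, inv_one]

def φ : PresentedGroup RelsXZ →* PresentedGroup RelsYU := PresentedGroup.toGroup fwd_rels
def ψ : PresentedGroup RelsYU →* PresentedGroup RelsXZ := PresentedGroup.toGroup bwd_rels

lemma φψ : φ.comp ψ = MonoidHom.id _ := by
  ext g
  cases g <;>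
    simp only [MonoidHom.comp_apply, MonoidHom.id_apply, φ, ψ, PresentedGroup.toGroup.of,
      bwd, map_mul, map_inv, map_pow, fwd]
  · group
  · rw [sq]; group

lemma ψφ : ψ.comp φ = MonoidHom.id _ := by
  ext g
  cases g <;>
    simp only [MonoidHom.comp_apply, MonoidHom.id_apply, φ, ψ, PresentedGroup.toGroup.of,
      fwd, map_mul, map_inv, map_pow, bwd]
  · group
  · group

end Aux

/-- The presentations `⟨y,u ∣ yuy = uyu, (yuy)^4 = 1⟩` and `⟨x,z ∣ x^4 = 1, x^2 = z^3⟩`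
define isomorphic groups, via `z ↦ yu` and `x ↦ (yuy)⁻¹`. -/
theorem presentations_isomorphic :
    ∃ φ : PresentedGroup RelsXZ ≃* PresentedGroup RelsYU,
      φ (PresentedGroup.of GenXZ.z) = PresentedGroup.of GenYU.y * PresentedGroup.of GenYU.u ∧
      φ (PresentedGroup.of GenXZ.x) =
        (PresentedGroup.of GenYU.y * PresentedGroup.of GenYU.u * PresentedGroup.of GenYU.y)⁻¹ := by
  refine ⟨MonoidHom.toMulEquiv Aux.φ Aux.ψ Aux.ψφ Aux.φψ, ?_, ?_⟩ <;>
    simp [MonoidHom.toMulEquiv, Aux.φ, PresentedGroup.toGroup.of, Aux.fwd]
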